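/- Suppose λ₁ = λ₂ = … = λₙ. Then every unit vector V ∈ span(e₁, …, e_{2n}) of the oscillator algebra 𝔤ₙ(λ) is a minimal unit vector field. -/

import Mathlib

open scoped RealInnerProductSpace
open Finset

noncomputable section

/-- The underlying inner product space of the oscillator algebra `𝔤ₙ(λ)`:
a `(2n+2)`-dimensional real inner product space. -/
abbrev Osc (n : ℕ) := EuclideanSpace ℝ (Fin (2*n+2))

/-- The basis vectors `e₁, …, eₙ`. -/
def oe (n : ℕ) (i : Fin n) : Osc n :=
  EuclideanSpace.single ⟨i.1, by have := i.2; omega⟩ 1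

/-- The basis vectors `e_{n+1}, …, e_{2n}`. -/
def oE (n : ℕ) (i : Fin n) : Osc n :=
  EuclideanSpace.single ⟨n + i.1, by have := i.2; omega⟩ 1

/-- The basis vector `ξ`. -/
def oXi (n : ℕ) : Osc n := EuclideanSpace.single ⟨2*n, by omega⟩ 1

/-- The basis vector `ζ`. -/
def oZeta (n : ℕ) : Osc n := EuclideanSpace.single ⟨2*n+1, by omega⟩ 1

/-- `br` is the Lie bracket of the oscillator algebra `𝔤ₙ(λ)`: the bilinear map
determined by `[eᵢ, e_{n+j}] = δᵢⱼ ξ`, `[ζ, eⱼ] = λⱼ e_{n+j}`, `[ζ, e_{n+j}] = −λⱼ eⱼ`,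
all other brackets of basis vectors being zero. -/
structure IsOscBracket (n : ℕ) (lam : Fin n → ℝ)
    (br : Osc n →ₗ[ℝ] Osc n →ₗ[ℝ] Osc n) : Prop where
  anti : ∀ X Y : Osc n, br X Y = - br Y X
  ee : ∀ i j : Fin n, br (oe n i) (oe n j) = 0
  eE : ∀ i j : Fin n, br (oe n i) (oE n j) = if i = j then oXi n else 0
  EE : ∀ i j : Fin n, br (oE n i) (oE n j) = 0
  exi : ∀ i : Fin n, br (oe n i) (oXi n) = 0
  Exi : ∀ i : Fin n, br (oE n i) (oXi n) = 0
  zee : ∀ j : Fin n, br (oZeta n) (oe n j) = lam j • oE n j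
  zeE : ∀ j : Fin n, br (oZeta n) (oE n j) = - (lam j • oe n j)
  xize : br (oXi n) (oZeta n) = 0

/-- `nab` is the Levi-Civita connection of the left-invariant metric (evaluated on
left-invariant fields): the bilinear map determined by the Koszul formula
`2 g(∇_X Y, Z) = g([X,Y], Z) − g([Y,Z], X) + g([Z,X], Y)`. -/
def IsLeviCivita (n : ℕ) (br nab : Osc n →ₗ[ℝ] Osc n →ₗ[ℝ] Osc n) : Prop :=
  ∀ X Y Z : Osc n,
    2 * ⟪nab X Y, Z⟫ = ⟪br X Y, Z⟫ - ⟪br Y Z, X⟫ + ⟪br Z X, Y⟫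

/-- The Nomizu operator `A_V X = −∇_X V`. -/
def nomizu {n : ℕ} (nab : Osc n →ₗ[ℝ] Osc n →ₗ[ℝ] Osc n) (V X : Osc n) : Osc n :=
  -(nab X V)

/-- The covariant derivative of the Nomizu operator:
`(∇_X A_V) Y = ∇_X (A_V Y) − A_V (∇_X Y)`. -/
def covNomizu {n : ℕ} (nab : Osc n →ₗ[ℝ] Osc n →ₗ[ℝ] Osc n) (V X Y : Osc n) : Osc n :=
  nab X (nomizu nab V Y) - nomizu nab V (nab X Y)

/-- The curvature tensor `R(X,Y)Z = ∇_X ∇_Y Z − ∇_Y ∇_X Z − ∇_{[X,Y]} Z`. -/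
def curvR {n : ℕ} (br nab : Osc n →ₗ[ℝ] Osc n →ₗ[ℝ] Osc n) (X Y Z : Osc n) : Osc n :=
  nab X (nab Y Z) - nab Y (nab X Z) - nab (br X Y) Z

/-- A unit vector `V ∈ 𝔤ₙ(λ)` is a *minimal* unit vector field if there is an orthonormal
basis `u₁, …, u_{2n+2}` of eigenvectors of `A_Vᵀ A_V` (the eigenvector condition being
expressed as `g(A_V W, A_V uᵢ) = σᵢ² g(W, uᵢ)` for all `W`) with eigenvalues `σᵢ²` such that
`Σᵢ ((∇_{uᵢ} A_V)uᵢ + A_V R(V, A_V uᵢ)uᵢ)/(1 + σᵢ²) = (Σᵢ σᵢ²/(1 + σᵢ²)) V`. -/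
def IsMinimal {n : ℕ} (br nab : Osc n →ₗ[ℝ] Osc n →ₗ[ℝ] Osc n) (V : Osc n) : Prop :=
  ∃ (u : Fin (2*n+2) → Osc n) (σ : Fin (2*n+2) → ℝ),
    (∀ i j, ⟪u i, u j⟫ = if i = j then 1 else 0) ∧
    (∀ i, ∀ W : Osc n,
      ⟪nomizu nab V W, nomizu nab V (u i)⟫ = (σ i)^2 * ⟪W, u i⟫) ∧
    (∑ i, (1 + (σ i)^2)⁻¹ •
        (covNomizu nab V (u i) (u i) +
          nomizu nab V (curvR br nab V (nomizu nab V (u i)) (u i))))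
      = (∑ i, (σ i)^2 / (1 + (σ i)^2)) • V

/-- The operator `φ` with `φ eᵢ = e_{n+i}`, `φ e_{n+i} = −eᵢ`, `φ ξ = φ ζ = 0`. -/
structure IsPhi (n : ℕ) (phi : Osc n →ₗ[ℝ] Osc n) : Prop where
  he : ∀ i : Fin n, phi (oe n i) = oE n i
  hE : ∀ i : Fin n, phi (oE n i) = - oe n i
  hxi : phi (oXi n) = 0
  hzeta : phi (oZeta n) = 0

/-- The operator `E_λ` with `E_λ eᵢ = λᵢ eᵢ`, `E_λ e_{n+i} = λᵢ e_{n+i}`, `E_λ ξ = E_λ ζ = 0`. -/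
structure IsElam (n : ℕ) (lam : Fin n → ℝ) (El : Osc n →ₗ[ℝ] Osc n) : Prop where
  he : ∀ i : Fin n, El (oe n i) = lam i • oe n i
  hE : ∀ i : Fin n, El (oE n i) = lam i • oE n i
  hxi : El (oXi n) = 0
  hzeta : El (oZeta n) = 0

/-! ### Auxiliary material -/

section AuxPhi

def phiFun (n : ℕ) (x : Osc n) : Osc n := WithLp.toLp 2 fun (k : Fin (2*n+2)) =>
  if h : (k:ℕ) < n then -x ⟨(k:ℕ) + n, by omega⟩
  else if h2 : (k:ℕ) < 2*n then x ⟨(k:ℕ) - n, by omega⟩ else 0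

def oscPhi (n : ℕ) : Osc n →ₗ[ℝ] Osc n where
  toFun := phiFun n
  map_add' x y := by
    ext k
    simp only [phiFun, PiLp.add_apply, PiLp.toLp_apply]
    split_ifs <;> ring
  map_smul' c x := by
    ext k
    simp only [phiFun, PiLp.toLp_apply, PiLp.smul_apply, smul_eq_mul, RingHom.id_apply]
    split_ifs <;> ring

variable {n : ℕ}

lemma phi_oe (i : Fin n) : oscPhi n (oe n i) = oE n i := by
  ext k
  simp only [oscPhi, LinearMap.coe_mk, AddHom.coe_mk, phiFun, PiLp.toLp_apply, oe, oE,
    EuclideanSpace.single_apply]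
  have hk := k.2
  have hi := i.2
  split_ifs with h1 h2 h3 h4 h5 <;> simp_all [Fin.ext_iff] <;> omega

lemma phi_oE (i : Fin n) : oscPhi n (oE n i) = -oe n i := by
  ext k
  simp only [oscPhi, LinearMap.coe_mk, AddHom.coe_mk, phiFun, PiLp.toLp_apply, oe, oE,
    EuclideanSpace.single_apply, PiLp.neg_apply]
  have hk := k.2
  have hi := i.2
  split_ifs with h1 h2 h3 h4 h5 <;> simp_all [Fin.ext_iff] <;> omega

lemma phi_xi : oscPhi n (oXi n) = 0 := by
  ext k
  simp only [oscPhi, LinearMap.coe_mk, AddHom.coe_mk, phiFun, PiLp.toLp_apply, oXi,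
    EuclideanSpace.single_apply, PiLp.zero_apply]
  have hk := k.2
  split_ifs <;> simp_all [Fin.ext_iff] <;> omega

lemma phi_zeta : oscPhi n (oZeta n) = 0 := by
  ext k
  simp only [oscPhi, LinearMap.coe_mk, AddHom.coe_mk, phiFun, PiLp.toLp_apply, oZeta,
    EuclideanSpace.single_apply, PiLp.zero_apply]
  have hk := k.2
  split_ifs <;> simp_all [Fin.ext_iff] <;> omega

lemma inner_ss (a b : Fin (2*n+2)) :
    ⟪(EuclideanSpace.single a 1 : Osc n), EuclideanSpace.single b 1⟫ =
      if a = b then 1 else 0 := by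
  rw [EuclideanSpace.inner_single_left]
  simp [EuclideanSpace.single_apply, eq_comm]

lemma inner_oe_oe (i j : Fin n) : ⟪oe n i, oe n j⟫ = if i = j then 1 else 0 := by
  rw [oe, oe, inner_ss]; simp [Fin.ext_iff]
lemma inner_oE_oE (i j : Fin n) : ⟪oE n i, oE n j⟫ = if i = j then 1 else 0 := by
  rw [oE, oE, inner_ss]; simp [Fin.ext_iff]
lemma inner_oe_oE (i j : Fin n) : ⟪oe n i, oE n j⟫ = 0 := by
  rw [oe, oE, inner_ss]; have := i.2; simp [Fin.ext_iff]; omega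
lemma inner_oE_oe (i j : Fin n) : ⟪oE n i, oe n j⟫ = 0 := by
  rw [oE, oe, inner_ss]; have := j.2; simp [Fin.ext_iff]; omega
lemma inner_oe_xi (i : Fin n) : ⟪oe n i, oXi n⟫ = 0 := by
  rw [oe, oXi, inner_ss]; have := i.2; simp [Fin.ext_iff]; omega
lemma inner_xi_oe (i : Fin n) : ⟪oXi n, oe n i⟫ = 0 := by
  rw [real_inner_comm]; exact inner_oe_xi i
lemma inner_oE_xi (i : Fin n) : ⟪oE n i, oXi n⟫ = 0 := by
  rw [oE, oXi, inner_ss]; have := i.2; simp [Fin.ext_iff]; omega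
lemma inner_xi_oE (i : Fin n) : ⟪oXi n, oE n i⟫ = 0 := by
  rw [real_inner_comm]; exact inner_oE_xi i
lemma inner_oe_zeta (i : Fin n) : ⟪oe n i, oZeta n⟫ = 0 := by
  rw [oe, oZeta, inner_ss]; have := i.2; simp [Fin.ext_iff]; omega
lemma inner_zeta_oe (i : Fin n) : ⟪oZeta n, oe n i⟫ = 0 := by
  rw [real_inner_comm]; exact inner_oe_zeta i
lemma inner_oE_zeta (i : Fin n) : ⟪oE n i, oZeta n⟫ = 0 := by
  rw [oE, oZeta, inner_ss]; have := i.2; simp [Fin.ext_iff]; omega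
lemma inner_zeta_oE (i : Fin n) : ⟪oZeta n, oE n i⟫ = 0 := by
  rw [real_inner_comm]; exact inner_oE_zeta i
lemma inner_xi_xi : ⟪oXi n, oXi n⟫ = (1:ℝ) := by rw [oXi, inner_ss]; simp
lemma inner_zeta_zeta : ⟪oZeta n, oZeta n⟫ = (1:ℝ) := by rw [oZeta, inner_ss]; simp
lemma inner_xi_zeta : ⟪oXi n, oZeta n⟫ = 0 := by
  rw [oXi, oZeta, inner_ss]; simp [Fin.ext_iff]
lemma inner_zeta_xi : ⟪oZeta n, oXi n⟫ = 0 := by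
  rw [real_inner_comm]; exact inner_xi_zeta

lemma single_cases (k : Fin (2*n+2)) :
    (∃ i, (EuclideanSpace.single k 1 : Osc n) = oe n i) ∨
    (∃ i, (EuclideanSpace.single k 1 : Osc n) = oE n i) ∨
    (EuclideanSpace.single k 1 : Osc n) = oXi n ∨
    (EuclideanSpace.single k 1 : Osc n) = oZeta n := by
  have hk := k.2
  rcases lt_or_ge (k:ℕ) n with h | h
  · exact Or.inl ⟨⟨k, h⟩, by rw [oe]⟩
  rcases lt_or_ge (k:ℕ) (2*n) with h2 | h2
  · refine Or.inr (Or.inl ⟨⟨(k:ℕ) - n, by omega⟩, ?_⟩)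
    have e : k = (⟨n + ((k:ℕ)-n), by omega⟩ : Fin (2*n+2)) := by
      apply Fin.ext; show (k:ℕ) = n + ((k:ℕ)-n); omega
    rw [oE]; exact congrArg (fun j => (EuclideanSpace.single j 1 : Osc n)) e
  rcases Nat.lt_or_ge (k:ℕ) (2*n+1) with h3 | h3
  · refine Or.inr (Or.inr (Or.inl ?_))
    have e : k = (⟨2*n, by omega⟩ : Fin (2*n+2)) := by
      apply Fin.ext; show (k:ℕ) = 2*n; omega
    rw [oXi]; exact congrArg (fun j => (EuclideanSpace.single j 1 : Osc n)) e
  · refine Or.inr (Or.inr (Or.inr ?_))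
    have e : k = (⟨2*n+1, by omega⟩ : Fin (2*n+2)) := by
      apply Fin.ext; show (k:ℕ) = 2*n+1; omega
    rw [oZeta]; exact congrArg (fun j => (EuclideanSpace.single j 1 : Osc n)) e

end AuxPhi

section AuxSkew
variable {n : ℕ}

lemma inner_ext_bilin (T S : Osc n →ₗ[ℝ] Osc n)
    (h : ∀ k l : Fin (2*n+2),
      ⟪T (EuclideanSpace.single k 1), (EuclideanSpace.single l 1 : Osc n)⟫ =
        ⟪(EuclideanSpace.single k 1 : Osc n), S (EuclideanSpace.single l 1)⟫)
    (x y : Osc n) : ⟪T x, y⟫ = ⟪x, S y⟫ := by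
  have b := EuclideanSpace.basisFun (Fin (2*n+2)) ℝ
  have hx : x = ∑ k, x k • (EuclideanSpace.single k 1 : Osc n) := by
    have := (EuclideanSpace.basisFun (Fin (2*n+2)) ℝ).sum_repr x
    simpa [EuclideanSpace.basisFun_apply, real_inner_comm,
      EuclideanSpace.inner_single_left] using this.symm
  have hy : y = ∑ l, y l • (EuclideanSpace.single l 1 : Osc n) := by
    have := (EuclideanSpace.basisFun (Fin (2*n+2)) ℝ).sum_repr y
    simpa [EuclideanSpace.basisFun_apply, real_inner_comm,
      EuclideanSpace.inner_single_left] using this.symm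
  rw [hx, hy]
  simp only [map_sum, map_smul, sum_inner, inner_sum, real_inner_smul_left,
    real_inner_smul_right]
  refine Finset.sum_congr rfl fun a _ => Finset.sum_congr rfl fun b _ => ?_
  rw [h b a]

lemma phi_skew (x y : Osc n) : ⟪oscPhi n x, y⟫ = -⟪x, oscPhi n y⟫ := by
  have := inner_ext_bilin (n := n) (oscPhi n) (-(oscPhi n)) ?_ x y
  · simpa using this
  intro k l
  rcases single_cases k with ⟨i, hi⟩ | ⟨i, hi⟩ | hi | hi <;>
    rcases single_cases l with ⟨j, hj⟩ | ⟨j, hj⟩ | hj | hj <;>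
      rw [hi, hj] <;>
        simp only [phi_oe, phi_oE, phi_xi, phi_zeta, LinearMap.neg_apply,
          inner_neg_left, inner_neg_right, inner_zero_left, inner_zero_right,
          inner_oe_oe, inner_oE_oE, inner_oe_oE, inner_oE_oe, inner_oe_xi,
          inner_xi_oe, inner_oE_xi, inner_xi_oE, inner_oe_zeta, inner_zeta_oe,
          inner_oE_zeta, inner_zeta_oE, inner_xi_xi, inner_zeta_zeta,
          inner_xi_zeta, inner_zeta_xi, neg_zero, neg_neg]

lemma phi_inner_xi (x : Osc n) : ⟪oscPhi n x, oXi n⟫ = 0 := by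
  rw [phi_skew, phi_xi, inner_zero_right, neg_zero]

lemma phi_inner_zeta (x : Osc n) : ⟪oscPhi n x, oZeta n⟫ = 0 := by
  rw [phi_skew, phi_zeta, inner_zero_right, neg_zero]

lemma inner_xi_phi (x : Osc n) : ⟪oXi n, oscPhi n x⟫ = 0 := by
  rw [real_inner_comm]; exact phi_inner_xi x

lemma inner_zeta_phi (x : Osc n) : ⟪oZeta n, oscPhi n x⟫ = 0 := by
  rw [real_inner_comm]; exact phi_inner_zeta x

end AuxSkew

section AuxConn

def brE (n : ℕ) (l : ℝ) : Osc n →ₗ[ℝ] Osc n →ₗ[ℝ] Osc n :=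
  LinearMap.mk₂ ℝ
    (fun X Y => ⟪oscPhi n X, Y⟫ • oXi n + (l * ⟪X, oZeta n⟫) • oscPhi n Y
      - (l * ⟪Y, oZeta n⟫) • oscPhi n X)
    (fun X X' Y => by
      simp only [map_add, inner_add_left, add_smul, mul_add, smul_add]
      module)
    (fun c X Y => by
      simp only [map_smul, real_inner_smul_left, mul_assoc, smul_smul]
      rw [smul_sub, smul_add, smul_smul, smul_smul, smul_smul]
      ring_nf)
    (fun X Y Y' => by
      simp only [map_add, inner_add_right, inner_add_left, add_smul, mul_add, smul_add]
      module)
    (fun c X Y => by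
      simp only [map_smul, real_inner_smul_left, real_inner_smul_right, smul_smul]
      rw [smul_sub, smul_add, smul_smul, smul_smul, smul_smul]
      ring_nf)

def nabE (n : ℕ) (l : ℝ) : Osc n →ₗ[ℝ] Osc n →ₗ[ℝ] Osc n :=
  LinearMap.mk₂ ℝ
    (fun X Y => (2⁻¹ * ⟪oscPhi n X, Y⟫) • oXi n - (2⁻¹ * ⟪Y, oXi n⟫) • oscPhi n X
      + (l * ⟪X, oZeta n⟫ - 2⁻¹ * ⟪X, oXi n⟫) • oscPhi n Y)
    (fun X X' Y => by
      simp only [map_add, inner_add_left, add_smul, mul_add, smul_add]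
      module)
    (fun c X Y => by
      simp only [map_smul, real_inner_smul_left, smul_smul]
      rw [smul_add, smul_sub, smul_smul, smul_smul, smul_smul]
      ring_nf)
    (fun X Y Y' => by
      simp only [map_add, inner_add_right, inner_add_left, add_smul, mul_add, smul_add]
      module)
    (fun c X Y => by
      simp only [map_smul, real_inner_smul_left, real_inner_smul_right, smul_smul]
      rw [smul_add, smul_sub, smul_smul, smul_smul, smul_smul]
      ring_nf)

variable {n : ℕ}

lemma brE_apply (l : ℝ) (X Y : Osc n) :
    brE n l X Y = ⟪oscPhi n X, Y⟫ • oXi n + (l * ⟪X, oZeta n⟫) • oscPhi n Y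
      - (l * ⟪Y, oZeta n⟫) • oscPhi n X := rfl

lemma nabE_apply (l : ℝ) (X Y : Osc n) :
    nabE n l X Y = (2⁻¹ * ⟪oscPhi n X, Y⟫) • oXi n - (2⁻¹ * ⟪Y, oXi n⟫) • oscPhi n X
      + (l * ⟪X, oZeta n⟫ - 2⁻¹ * ⟪X, oXi n⟫) • oscPhi n Y := rfl

lemma nabE_koszul (l : ℝ) (X Y Z : Osc n) :
    2 * ⟪nabE n l X Y, Z⟫ = ⟪brE n l X Y, Z⟫ - ⟪brE n l Y Z, X⟫ + ⟪brE n l Z X, Y⟫ := by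
  have sZX : ⟪oscPhi n Z, X⟫ = -⟪oscPhi n X, Z⟫ := by
    rw [phi_skew, real_inner_comm]
  have sYX : ⟪oscPhi n Y, X⟫ = -⟪oscPhi n X, Y⟫ := by
    rw [phi_skew, real_inner_comm]
  have sZY : ⟪oscPhi n Z, Y⟫ = -⟪oscPhi n Y, Z⟫ := by
    rw [phi_skew, real_inner_comm]
  have cX : ⟪oXi n, X⟫ = ⟪X, oXi n⟫ := real_inner_comm _ _
  have cY : ⟪oXi n, Y⟫ = ⟪Y, oXi n⟫ := real_inner_comm _ _
  have cZ : ⟪oXi n, Z⟫ = ⟪Z, oXi n⟫ := real_inner_comm _ _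
  simp only [brE_apply, nabE_apply, inner_add_left, inner_sub_left,
    real_inner_smul_left]
  rw [sZX, sYX, sZY, cX, cY, cZ]
  ring

end AuxConn

section AuxEq
variable {n : ℕ}

lemma br_self_eq_zero {br : Osc n →ₗ[ℝ] Osc n →ₗ[ℝ] Osc n}
    (h : ∀ X Y : Osc n, br X Y = - br Y X) (x : Osc n) : br x x = 0 := by
  have h2 : (2:ℝ) • br x x = 0 := by
    rw [two_smul]; nth_rewrite 2 [h x x]; simp
  rcases smul_eq_zero.1 h2 with h3 | h3
  · norm_num at h3
  · exact h3

lemma br_eq_brE {lam : Fin n → ℝ} {br : Osc n →ₗ[ℝ] Osc n →ₗ[ℝ] Osc n}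
    (hbr : IsOscBracket n lam br) (l : ℝ) (hl : ∀ j, lam j = l) :
    br = brE n l := by
  have h1 : ∀ i j, br (oE n i) (oe n j) = -(if i = j then oXi n else 0) := by
    intro i j; rw [hbr.anti, hbr.eE]; congr 1; exact if_congr eq_comm rfl rfl
  have h2 : ∀ i, br (oe n i) (oZeta n) = -(l • oE n i) := by
    intro i; rw [hbr.anti, hbr.zee, hl]
  have h3 : ∀ i, br (oE n i) (oZeta n) = l • oe n i := by
    intro i; rw [hbr.anti, hbr.zeE, hl, neg_neg]
  have h4 : ∀ i, br (oXi n) (oe n i) = 0 := by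
    intro i; rw [hbr.anti, hbr.exi, neg_zero]
  have h5 : ∀ i, br (oXi n) (oE n i) = 0 := by
    intro i; rw [hbr.anti, hbr.Exi, neg_zero]
  have h6 : br (oXi n) (oXi n) = 0 := br_self_eq_zero hbr.anti _
  have h7 : br (oZeta n) (oXi n) = 0 := by rw [hbr.anti, hbr.xize, neg_zero]
  have h8 : br (oZeta n) (oZeta n) = 0 := br_self_eq_zero hbr.anti _
  have h9 : ∀ j, br (oZeta n) (oe n j) = l • oE n j := by
    intro j; rw [hbr.zee, hl]
  have h10 : ∀ j, br (oZeta n) (oE n j) = -(l • oe n j) := by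
    intro j; rw [hbr.zeE, hl]
  apply Module.Basis.ext (EuclideanSpace.basisFun (Fin (2*n+2)) ℝ).toBasis
  intro k
  apply Module.Basis.ext (EuclideanSpace.basisFun (Fin (2*n+2)) ℝ).toBasis
  intro m
  simp only [OrthonormalBasis.coe_toBasis, EuclideanSpace.basisFun_apply]
  rcases single_cases k with ⟨i, hi⟩ | ⟨i, hi⟩ | hi | hi <;>
    rcases single_cases m with ⟨j, hj⟩ | ⟨j, hj⟩ | hj | hj <;>
      rw [hi, hj] <;>
        simp only [hbr.ee, hbr.eE, hbr.EE, hbr.exi, hbr.Exi, hbr.xize,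
          h1, h2, h3, h4, h5, h6, h7, h8, h9, h10,
          brE_apply, phi_oe, phi_oE, phi_xi, phi_zeta,
          inner_oe_oe, inner_oE_oE, inner_oe_oE, inner_oE_oe, inner_oe_xi,
          inner_xi_oe, inner_oE_xi, inner_xi_oE, inner_oe_zeta, inner_zeta_oe,
          inner_oE_zeta, inner_zeta_oE, inner_xi_xi, inner_zeta_zeta,
          inner_xi_zeta, inner_zeta_xi,
          inner_neg_left, inner_zero_left, inner_zero_right,
          zero_smul, smul_zero, mul_zero, mul_one, zero_add, add_zero,
          sub_zero, zero_sub, neg_zero, neg_neg, smul_neg, one_smul] <;>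
      first
        | rfl
        | (split_ifs <;> simp [neg_smul])

lemma nab_eq_nabE {br nab : Osc n →ₗ[ℝ] Osc n →ₗ[ℝ] Osc n} {l : ℝ}
    (hbrE : br = brE n l) (hlc : IsLeviCivita n br nab) :
    ∀ X Y, nab X Y = nabE n l X Y := by
  intro X Y
  apply ext_inner_right ℝ
  intro Z
  have h1 := hlc X Y Z
  rw [hbrE] at h1
  have h2 := nabE_koszul l X Y Z
  have h3 : 2 * ⟪nab X Y, Z⟫ = 2 * ⟪nabE n l X Y, Z⟫ := by rw [h1, h2]
  linarith

end AuxEq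

section AuxSpan
variable {n : ℕ}

lemma span_inner_xi {V : Osc n}
    (hV : V ∈ Submodule.span ℝ (Set.range (oe n) ∪ Set.range (oE n))) :
    ⟪V, oXi n⟫ = 0 := by
  induction hV using Submodule.span_induction with
  | mem x hx =>
    rcases hx with ⟨i, rfl⟩ | ⟨i, rfl⟩
    · exact inner_oe_xi i
    · exact inner_oE_xi i
  | zero => exact inner_zero_left _
  | add x y _ _ hx hy => rw [inner_add_left, hx, hy, add_zero]
  | smul c x _ hx => rw [real_inner_smul_left, hx, mul_zero]

lemma span_inner_zeta {V : Osc n}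
    (hV : V ∈ Submodule.span ℝ (Set.range (oe n) ∪ Set.range (oE n))) :
    ⟪V, oZeta n⟫ = 0 := by
  induction hV using Submodule.span_induction with
  | mem x hx =>
    rcases hx with ⟨i, rfl⟩ | ⟨i, rfl⟩
    · exact inner_oe_zeta i
    · exact inner_oE_zeta i
  | zero => exact inner_zero_left _
  | add x y _ _ hx hy => rw [inner_add_left, hx, hy, add_zero]
  | smul c x _ hx => rw [real_inner_smul_left, hx, mul_zero]

lemma span_phi_phi {V : Osc n}
    (hV : V ∈ Submodule.span ℝ (Set.range (oe n) ∪ Set.range (oE n))) :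
    oscPhi n (oscPhi n V) = -V := by
  induction hV using Submodule.span_induction with
  | mem x hx =>
    rcases hx with ⟨i, rfl⟩ | ⟨i, rfl⟩
    · rw [phi_oe, phi_oE]
    · rw [phi_oE, map_neg, phi_oe]
  | zero => simp
  | add x y _ _ hx hy => rw [map_add, map_add, hx, hy, neg_add]
  | smul c x _ hx => rw [map_smul, map_smul, hx, smul_neg]

end AuxSpan

set_option maxHeartbeats 2000000 in
/-- If `λ₁ = … = λₙ`, then every unit `V ∈ span(e₁,…,e_{2n})` is a minimal unit
vector field on the oscillator group. -/
theorem minimal_equal_lambdas (n : ℕ) (hn : 1 ≤ n) (lam : Fin n → ℝ)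
    (hlam : ∀ i j : Fin n, lam i = lam j)
    (br nab : Osc n →ₗ[ℝ] Osc n →ₗ[ℝ] Osc n)
    (hbr : IsOscBracket n lam br) (hlc : IsLeviCivita n br nab)
    (V : Osc n)
    (hV : V ∈ Submodule.span ℝ (Set.range (oe n) ∪ Set.range (oE n)))
    (hVunit : ‖V‖ = 1) :
    IsMinimal br nab V := by
  classical
  set l : ℝ := lam ⟨0, hn⟩ with hl0
  have hl : ∀ j, lam j = l := fun j => hlam j ⟨0, hn⟩
  have hbrE : br = brE n l := br_eq_brE hbr l hl
  have nabF : ∀ X Y, nab X Y = nabE n l X Y := nab_eq_nabE hbrE hlc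
  have hVxi : ⟪V, oXi n⟫ = 0 := span_inner_xi hV
  have hVzeta : ⟪V, oZeta n⟫ = 0 := span_inner_zeta hV
  have hφφV : oscPhi n (oscPhi n V) = -V := span_phi_phi hV
  have hVV : ⟪V, V⟫ = (1:ℝ) := by
    rw [real_inner_self_eq_norm_sq, hVunit]; norm_num
  have hφVφV : ⟪oscPhi n V, oscPhi n V⟫ = (1:ℝ) := by
    rw [phi_skew, hφφV, inner_neg_right, hVV]; norm_num
  have hVφV : ⟪V, oscPhi n V⟫ = 0 := by
    have h1 := phi_skew V V
    have h2 := real_inner_comm (oscPhi n V) V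
    linarith [h1, h2]
  have hφVV : ⟪oscPhi n V, V⟫ = 0 := by rw [real_inner_comm]; exact hVφV
  have hφVxi : ⟪oscPhi n V, oXi n⟫ = 0 := phi_inner_xi V
  have hφVzeta : ⟪oscPhi n V, oZeta n⟫ = 0 := phi_inner_zeta V
  have hxiφV : ⟪oXi n, oscPhi n V⟫ = 0 := inner_xi_phi V
  -- the Nomizu operator
  have hA : ∀ X : Osc n, nomizu nab V X =
      (2⁻¹ * ⟪X, oscPhi n V⟫) • oXi n
        + (2⁻¹ * ⟪X, oXi n⟫ - l * ⟪X, oZeta n⟫) • oscPhi n V := by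
    intro X
    have hs : ⟪oscPhi n X, V⟫ = -⟪X, oscPhi n V⟫ := phi_skew X V
    rw [nomizu, nabF, nabE_apply, hs, hVxi]
    module
  -- the normalizing constant and the vectors w, w'
  have hl2 : (0:ℝ) < 4⁻¹ + l^2 := by positivity
  obtain ⟨s, hs_def⟩ : ∃ s : ℝ, s = Real.sqrt (4⁻¹ + l^2) := ⟨_, rfl⟩
  have hs2 : s^2 = 4⁻¹ + l^2 := by rw [hs_def]; exact Real.sq_sqrt hl2.le
  have hspos : 0 < s := by rw [hs_def]; exact Real.sqrt_pos.2 hl2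
  have hsne : s ≠ 0 := ne_of_gt hspos
  obtain ⟨w, hw_def⟩ : ∃ w : Osc n,
      w = s⁻¹ • (((2:ℝ)⁻¹) • oXi n - l • oZeta n) := ⟨_, rfl⟩
  obtain ⟨w', hw'_def⟩ : ∃ w' : Osc n,
      w' = s⁻¹ • (l • oXi n + ((2:ℝ)⁻¹) • oZeta n) := ⟨_, rfl⟩
  have hXw : ∀ X : Osc n, ⟪X, w⟫ = s⁻¹ * (2⁻¹ * ⟪X, oXi n⟫ - l * ⟪X, oZeta n⟫) := by
    intro X
    rw [hw_def, real_inner_smul_right, inner_sub_right, real_inner_smul_right,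
      real_inner_smul_right]
  have hXw' : ∀ X : Osc n, ⟪X, w'⟫ = s⁻¹ * (l * ⟪X, oXi n⟫ + 2⁻¹ * ⟪X, oZeta n⟫) := by
    intro X
    rw [hw'_def, real_inner_smul_right, inner_add_right, real_inner_smul_right,
      real_inner_smul_right]
  have hwxi : ⟪w, oXi n⟫ = s⁻¹ * 2⁻¹ := by
    rw [real_inner_comm, hXw, inner_xi_xi, inner_xi_zeta]; ring
  have hwzeta : ⟪w, oZeta n⟫ = -(s⁻¹ * l) := by
    rw [real_inner_comm, hXw, inner_zeta_xi, inner_zeta_zeta]; ring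
  have hw'xi : ⟪w', oXi n⟫ = s⁻¹ * l := by
    rw [real_inner_comm, hXw', inner_xi_xi, inner_xi_zeta]; ring
  have hw'zeta : ⟪w', oZeta n⟫ = s⁻¹ * 2⁻¹ := by
    rw [real_inner_comm, hXw', inner_zeta_xi, inner_zeta_zeta]; ring
  have hφw : oscPhi n w = 0 := by
    rw [hw_def, map_smul, map_sub, map_smul, map_smul, phi_xi, phi_zeta]
    simp
  have hVw : ⟪V, w⟫ = 0 := by rw [hXw, hVxi, hVzeta]; ring
  have hwV : ⟪w, V⟫ = 0 := by rw [real_inner_comm]; exact hVw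
  have hVw' : ⟪V, w'⟫ = 0 := by rw [hXw', hVxi, hVzeta]; ring
  have hw'V : ⟪w', V⟫ = 0 := by rw [real_inner_comm]; exact hVw'
  have hφVw : ⟪oscPhi n V, w⟫ = 0 := by rw [hXw, hφVxi, hφVzeta]; ring
  have hwφV : ⟪w, oscPhi n V⟫ = 0 := by rw [real_inner_comm]; exact hφVw
  have hφVw' : ⟪oscPhi n V, w'⟫ = 0 := by rw [hXw', hφVxi, hφVzeta]; ring
  have hw'φV : ⟪w', oscPhi n V⟫ = 0 := by rw [real_inner_comm]; exact hφVw'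
  have hww : ⟪w, w⟫ = (1:ℝ) := by
    rw [hXw, hwxi, hwzeta]
    rw [show s⁻¹ * (2⁻¹ * (s⁻¹ * 2⁻¹) - l * -(s⁻¹ * l)) = (4⁻¹ + l^2) / s^2 by
      field_simp; ring]
    rw [← hs2, div_self (by positivity)]
  have hww' : ⟪w, w'⟫ = 0 := by rw [hXw', hwxi, hwzeta]; ring
  have hw'w : ⟪w', w⟫ = 0 := by rw [real_inner_comm]; exact hww'
  have hw'w' : ⟪w', w'⟫ = (1:ℝ) := by
    rw [hXw', hw'xi, hw'zeta]
    rw [show s⁻¹ * (l * (s⁻¹ * l) + 2⁻¹ * (s⁻¹ * 2⁻¹)) = (4⁻¹ + l^2) / s^2 by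
      field_simp; ring]
    rw [← hs2, div_self (by positivity)]
  have hβw : 2⁻¹ * ⟪w, oXi n⟫ - l * ⟪w, oZeta n⟫ = s := by
    rw [hwxi, hwzeta]
    rw [show (2:ℝ)⁻¹ * (s⁻¹ * 2⁻¹) - l * -(s⁻¹ * l) = s⁻¹ * (4⁻¹ + l^2) by ring]
    rw [← hs2, sq]
    field_simp
  -- the four distinguished indices
  obtain ⟨i0, hi0⟩ : ∃ i : Fin (2*n+2), i = ⟨0, by omega⟩ := ⟨_, rfl⟩
  obtain ⟨i1, hi1⟩ : ∃ i : Fin (2*n+2), i = ⟨1, by omega⟩ := ⟨_, rfl⟩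
  obtain ⟨i2, hi2⟩ : ∃ i : Fin (2*n+2), i = ⟨2, by omega⟩ := ⟨_, rfl⟩
  obtain ⟨i3, hi3⟩ : ∃ i : Fin (2*n+2), i = ⟨3, by omega⟩ := ⟨_, rfl⟩
  have hne01 : i0 ≠ i1 := by simp [hi0, hi1, Fin.ext_iff]
  have hne02 : i0 ≠ i2 := by simp [hi0, hi2, Fin.ext_iff]
  have hne03 : i0 ≠ i3 := by simp [hi0, hi3, Fin.ext_iff]
  have hne12 : i1 ≠ i2 := by simp [hi1, hi2, Fin.ext_iff]
  have hne13 : i1 ≠ i3 := by simp [hi1, hi3, Fin.ext_iff]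
  have hne23 : i2 ≠ i3 := by simp [hi2, hi3, Fin.ext_iff]
  obtain ⟨v, hv_def⟩ : ∃ v : Fin (2*n+2) → Osc n, v = fun i =>
      if i = i0 then V else if i = i1 then oscPhi n V
        else if i = i2 then w else if i = i3 then w' else 0 := ⟨_, rfl⟩
  have hv0 : v i0 = V := by simp [hv_def]
  have hv1 : v i1 = oscPhi n V := by simp [hv_def, hne01.symm]
  have hv2 : v i2 = w := by simp [hv_def, hne02.symm, hne12.symm]
  have hv3 : v i3 = w' := by simp [hv_def, hne03.symm, hne13.symm, hne23.symm]
  have horth : Orthonormal ℝ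
      (Set.restrict ({i0, i1, i2, i3} : Set (Fin (2*n+2))) v) := by
    rw [orthonormal_iff_ite]
    rintro ⟨a, ha⟩ ⟨b, hb⟩
    simp only [Set.restrict_apply, Subtype.mk.injEq]
    simp only [Set.mem_insert_iff, Set.mem_singleton_iff] at ha hb
    rcases ha with rfl | rfl | rfl | rfl <;> rcases hb with rfl | rfl | rfl | rfl <;>
      simp [-inner_self_eq_norm_sq_to_K, Set.restrict, hv0, hv1, hv2, hv3, hne01, hne02, hne03, hne12, hne13, hne23,
        hne01.symm, hne02.symm, hne03.symm, hne12.symm, hne13.symm, hne23.symm,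
        hVV, hVφV, hφVV, hφVφV, hVw, hwV, hVw', hw'V, hφVw, hwφV, hφVw', hw'φV,
        hww, hww', hw'w, hw'w']
  have hcard : Module.finrank ℝ (Osc n) = Fintype.card (Fin (2*n+2)) := by
    simp [finrank_euclideanSpace_fin]
  obtain ⟨b, hb⟩ :=
    Orthonormal.exists_orthonormalBasis_extension_of_card_eq hcard horth
  have hb0 : b i0 = V := (hb i0 (by simp)).trans hv0
  have hb1 : b i1 = oscPhi n V := (hb i1 (by simp)).trans hv1
  have hb2 : b i2 = w := (hb i2 (by simp)).trans hv2
  have hbij : ∀ i j, ⟪b i, b j⟫ = if i = j then (1:ℝ) else 0 :=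
    orthonormal_iff_ite.1 b.orthonormal
  -- eigen-data
  obtain ⟨σ, hσ_def⟩ : ∃ σ : Fin (2*n+2) → ℝ,
      σ = fun i => if i = i1 then 2⁻¹ else if i = i2 then s else 0 := ⟨_, rfl⟩
  have hσ1 : σ i1 = 2⁻¹ := by simp [hσ_def]
  have hσ2 : σ i2 = s := by simp [hσ_def, hne12.symm]
  have hσ0 : ∀ i, i ≠ i1 → i ≠ i2 → σ i = 0 := by
    intro i h1 h2; simp [hσ_def, h1, h2]
  have he1 : ∀ i, i ≠ i1 → ⟪b i, oscPhi n V⟫ = 0 := by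
    intro i h
    have := hbij i i1
    rw [hb1, if_neg h] at this
    exact this
  have he2 : ∀ i, i ≠ i2 → 2⁻¹ * ⟪b i, oXi n⟫ - l * ⟪b i, oZeta n⟫ = 0 := by
    intro i h
    have h0 := hbij i i2
    rw [hb2, if_neg h, hXw] at h0
    rcases mul_eq_zero.1 h0 with h' | h'
    · exact absurd h' (inv_ne_zero hsne)
    · exact h'
  have he3 : ∀ i, i ≠ i0 → ⟪b i, V⟫ = 0 := by
    intro i h
    have := hbij i i0
    rw [hb0, if_neg h] at this
    exact this
  -- inner products of Nomizu images
  have hAinner : ∀ X Y : Osc n, ⟪nomizu nab V X, nomizu nab V Y⟫ =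
      (2⁻¹ * ⟪X, oscPhi n V⟫) * (2⁻¹ * ⟪Y, oscPhi n V⟫)
        + (2⁻¹ * ⟪X, oXi n⟫ - l * ⟪X, oZeta n⟫)
          * (2⁻¹ * ⟪Y, oXi n⟫ - l * ⟪Y, oZeta n⟫) := by
    intro X Y
    rw [hA, hA]
    rw [inner_add_left, inner_add_right, inner_add_right, real_inner_smul_left,
      real_inner_smul_left, real_inner_smul_left, real_inner_smul_left,
      real_inner_smul_right, real_inner_smul_right, real_inner_smul_right,
      real_inner_smul_right, inner_xi_xi, hxiφV, hφVxi, hφVφV]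
    ring
  -- various covariant derivative values
  have hnVV : nab V V = 0 := by
    rw [nabF, nabE_apply, hφVV, hVxi, hVzeta]; simp
  have hnXxi : ∀ X : Osc n, nab X (oXi n) = -(((2:ℝ)⁻¹) • oscPhi n X) := by
    intro X
    rw [nabF, nabE_apply, phi_xi, phi_inner_xi, inner_xi_xi]
    simp
  have hnXzeta : ∀ X : Osc n, nab X (oZeta n) = 0 := by
    intro X
    rw [nabF, nabE_apply, phi_zeta, phi_inner_zeta, inner_zeta_xi]
    simp
  have hnXw : ∀ X : Osc n, nab X w = -((s⁻¹ * 4⁻¹) • oscPhi n X) := by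
    intro X
    rw [hw_def, map_smul, map_sub, map_smul, map_smul, hnXxi, hnXzeta]
    module
  have hnφVφV : nab (oscPhi n V) (oscPhi n V) = 0 := by
    rw [nabF, nabE_apply, hφφV, hφVxi, hφVzeta]
    simp [inner_neg_left, hVφV]
  have hnVφV : nab V (oscPhi n V) = ((2:ℝ)⁻¹) • oXi n := by
    rw [nabF, nabE_apply, hφVφV, hφVxi, hVzeta, hVxi, hφφV]
    module
  have hnξφV : nab (oXi n) (oscPhi n V) = ((2:ℝ)⁻¹) • V := by
    rw [nabF, nabE_apply, phi_xi, hφφV, inner_xi_zeta, inner_xi_xi, hφVxi]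
    rw [show ⟪(0:Osc n), oscPhi n V⟫ = 0 from inner_zero_left _]
    module
  have hnφVxi : nab (oscPhi n V) (oXi n) = ((2:ℝ)⁻¹) • V := by
    rw [hnXxi, hφφV]; module
  have hnξξ : nab (oXi n) (oXi n) = 0 := by
    rw [hnXxi, phi_xi]; simp
  have hbrVξ : br V (oXi n) = 0 := by
    rw [hbrE, brE_apply, phi_xi, hφVxi, inner_xi_zeta]
    simp
  have hbrVφV : br V (oscPhi n V) = oXi n := by
    rw [hbrE, brE_apply, hφVφV, hφVzeta, hVzeta]
    simp
  -- the key quantity, case by case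
  have hbig : ∀ i, covNomizu nab V (b i) (b i)
      + nomizu nab V (curvR br nab V (nomizu nab V (b i)) (b i)) = (σ i)^2 • V := by
    intro i
    by_cases h1 : i = i1
    · subst h1
      rw [hb1, hσ1]
      have hAφV : nomizu nab V (oscPhi n V) = ((2:ℝ)⁻¹) • oXi n := by
        rw [hA, hφVφV, hφVxi, hφVzeta]; module
      rw [covNomizu, curvR, hAφV, hnφVφV]
      simp only [map_smul, LinearMap.smul_apply, hnφVxi, hnξφV, hnVφV, hnξξ,
        hbrVξ, hnVV, nomizu, map_zero, LinearMap.zero_apply, smul_zero,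
        sub_zero, zero_sub, neg_zero, neg_neg, add_zero, zero_add]
      module
    by_cases h2 : i = i2
    · subst h2
      rw [hb2, hσ2]
      have hAw : nomizu nab V w = s • oscPhi n V := by
        rw [hA, hwφV, hβw]; module
      have hnww : nab w w = 0 := by
        rw [nabF, nabE_apply, hφw]; simp
      have hnwφV : nab w (oscPhi n V) = s • V := by
        rw [nabF, nabE_apply, hφw, hφVxi, hwzeta, hwxi, hφφV]
        rw [show ⟪(0:Osc n), oscPhi n V⟫ = 0 from inner_zero_left _]
        rw [show (l * -(s⁻¹ * l) - 2⁻¹ * (s⁻¹ * 2⁻¹)) = -(s⁻¹ * (4⁻¹ + l^2)) by ring]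
        rw [← hs2, sq]
        rw [show s⁻¹ * (s * s) = s by field_simp]
        module
      have hnφVw : nab (oscPhi n V) w = (s⁻¹ * 4⁻¹) • V := by
        rw [hnXw, hφφV]; module
      have hnVw : nab V w = -((s⁻¹ * 4⁻¹) • oscPhi n V) := hnXw V
      have hnξw : nab (oXi n) w = 0 := by
        rw [hnXw, phi_xi]; simp
      rw [covNomizu, curvR, hAw, hnww]
      simp only [map_smul, LinearMap.smul_apply, map_neg, LinearMap.neg_apply,
        hnwφV, hnφVw, hnVw, hnξw, hbrVφV, hnφVφV, hnVV, nomizu, map_zero,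
        LinearMap.zero_apply, smul_zero, neg_zero, sub_zero, zero_sub, neg_neg,
        add_zero, zero_add]
      module
    · have e1 := he1 i h1
      have e2 := he2 i h2
      have hAbi : nomizu nab V (b i) = 0 := by
        rw [hA, e1, e2]; simp
      have hφXX : ⟪oscPhi n (b i), b i⟫ = 0 := by
        have q1 := phi_skew (b i) (b i)
        have q2 := real_inner_comm (oscPhi n (b i)) (b i)
        linarith [q1, q2]
      have hXX : nab (b i) (b i)
          = (l * ⟪b i, oZeta n⟫ - ⟪b i, oXi n⟫) • oscPhi n (b i) := by
        rw [nabF, nabE_apply, hφXX]; module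
      have hφφXV : ⟪oscPhi n (oscPhi n (b i)), V⟫ = -⟪b i, V⟫ := by
        rw [phi_skew, phi_skew, hφφV, inner_neg_right]
        simp
      have hnφXV : nab (oscPhi n (b i)) V
          = (2⁻¹ * -⟪b i, V⟫) • oXi n := by
        rw [nabF, nabE_apply, hVxi, phi_inner_zeta, phi_inner_xi, hφφXV]
        module
      have hkey : (l * ⟪b i, oZeta n⟫ - ⟪b i, oXi n⟫) * ⟪b i, V⟫ = 0 := by
        by_cases h0 : i = i0
        · subst h0
          rw [hb0, hVzeta, hVxi]
          ring
        · rw [he3 i h0, mul_zero]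
      rw [covNomizu, curvR, hAbi, hXX]
      simp only [nomizu, map_zero, LinearMap.zero_apply, LinearMap.map_zero,
        map_smul, LinearMap.smul_apply, map_neg, LinearMap.neg_apply,
        smul_zero, neg_zero, sub_zero, zero_sub, neg_neg]
      rw [hnφXV, hσ0 i h1 h2]
      rw [smul_smul]
      rw [show (l * ⟪b i, oZeta n⟫ - ⟪b i, oXi n⟫) * (2⁻¹ * -⟪b i, V⟫)
          = -(2⁻¹ * ((l * ⟪b i, oZeta n⟫ - ⟪b i, oXi n⟫) * ⟪b i, V⟫)) by ring]
      rw [hkey]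
      simp
  refine ⟨fun i => b i, σ, hbij, ?_, ?_⟩
  · intro i W
    show ⟪nomizu nab V W, nomizu nab V (b i)⟫ = (σ i)^2 * ⟪W, b i⟫
    by_cases h1 : i = i1
    · subst h1
      rw [hb1, hσ1, hAinner, hφVφV, hφVxi, hφVzeta]
      ring
    by_cases h2 : i = i2
    · subst h2
      rw [hb2, hσ2, hAinner, hwφV, hβw, hXw]
      field_simp
      ring
    · rw [hAinner, he1 i h1, he2 i h2, hσ0 i h1 h2]
      ring
  · show (∑ i, (1 + (σ i)^2)⁻¹ •
        (covNomizu nab V (b i) (b i) +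
          nomizu nab V (curvR br nab V (nomizu nab V (b i)) (b i))))
      = (∑ i, (σ i)^2 / (1 + (σ i)^2)) • V
    rw [show (∑ i, (1 + (σ i)^2)⁻¹ •
        (covNomizu nab V (b i) (b i) +
          nomizu nab V (curvR br nab V (nomizu nab V (b i)) (b i))))
      = ∑ i, (1 + (σ i)^2)⁻¹ • ((σ i)^2 • V) from
      Finset.sum_congr rfl fun i _ => by rw [hbig i]]
    rw [Finset.sum_smul]
    refine Finset.sum_congr rfl fun i _ => ?_
    rw [smul_smul, inv_mul_eq_div]
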